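/- arXiv:2401.01791 — 10 statements merged into one kernel-verified Lean document; each statement's English description precedes it below -/
import Mathlib

section
/- If an optimistic certificate for view v exists (2f+1 optimistic votes), and every honest node that sends an optimistic vote in view v never afterwards sends a timeout message for view v-1, and honest optimistic voters have not previously sent a timeout for v-1, then no timeout certificate for view v-1 (2f+1 timeout messages) exists. -/
/-- If an optimistic certificate for view `v` exists and honest optimistic voters for `v`
never send a timeout for view `v-1`, then no timeout certificate for view `v-1` exists. -/
theorem stmt4 {α : Type*} [DecidableEq α] (f : ℕ)
    (V honest : Finset α)
    (hV : V.card = 3 * f + 1)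
    (hhon : honest ⊆ V)
    (hbyz : (V \ honest).card ≤ f)
    (optVote timeoutPrev : α → Prop)
    (hrule : ∀ i ∈ honest, optVote i → ¬ timeoutPrev i)
    (hOC : ∃ S : Finset α, S ⊆ V ∧ 2 * f + 1 ≤ S.card ∧ ∀ i ∈ S, optVote i) :
    ¬ ∃ S : Finset α, S ⊆ V ∧ 2 * f + 1 ≤ S.card ∧ ∀ i ∈ S, timeoutPrev i := by
  rintro ⟨T, hTV, hTc, hTt⟩
  obtain ⟨S, hSV, hSc, hSo⟩ := hOC
  have hunion : (S ∪ T).card ≤ 3 * f + 1 := hV ▸ Finset.card_le_card (Finset.union_subset hSV hTV)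
  have hint : f + 1 ≤ (S ∩ T).card := by
    have := Finset.card_union_add_card_inter S T
    omega
  have hsub : (S ∩ T) \ honest ⊆ V \ honest :=
    Finset.sdiff_subset_sdiff (fun x hx => hSV (Finset.mem_of_mem_inter_left hx)) le_rfl
  have : ((S ∩ T) ∩ honest).Nonempty := by
    rw [← Finset.card_pos]
    have h1 : ((S ∩ T) \ honest).card ≤ f := le_trans (Finset.card_le_card hsub) hbyz
    have := Finset.card_sdiff_add_card_inter (S ∩ T) honest
    omega
  obtain ⟨x, hx⟩ := this
  simp only [Finset.mem_inter] at hx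
  exact hrule x hx.2 (hSo x hx.1.1) (hTt x hx.1.2)
end

section
/- If an optimistic certificate and a normal certificate both exist for view v, then they certify the same block, given that every honest node sends at most one optimistic vote and at most one normal vote per view, an honest node only optimistic-votes if it has not yet voted in v, and an honest node only normal-votes for a block B if it has not optimistic-voted for a block different from B in v. -/
/-- Optimistic equivalence: if an optimistic certificate for `(v, B1)` and a normal
certificate for `(v, B2)` both exist then `B1 = B2`, given the honest voting constraints. -/
theorem stmt5 {α Block : Type*} [DecidableEq α] (f : ℕ)
    (V honest : Finset α)
    (hV : V.card = 3 * f + 1)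
    (hhon : honest ⊆ V)
    (hbyz : (V \ honest).card ≤ f)
    (optVote normVote : α → Block → Prop)
    (hopt_once : ∀ i ∈ honest, ∀ B B', optVote i B → optVote i B' → B = B')
    (hnorm_once : ∀ i ∈ honest, ∀ B B', normVote i B → normVote i B' → B = B')
    (hnorm_rule : ∀ i ∈ honest, ∀ B, normVote i B → ∀ B', optVote i B' → B' = B)
    (B1 B2 : Block)
    (hOpt : ∃ S : Finset α, S ⊆ V ∧ 2 * f + 1 ≤ S.card ∧ ∀ i ∈ S, optVote i B1)
    (hNorm : ∃ S : Finset α, S ⊆ V ∧ 2 * f + 1 ≤ S.card ∧ ∀ i ∈ S, normVote i B2) :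
    B1 = B2 := by
  obtain ⟨S1, hS1V, hS1c, hS1⟩ := hOpt
  obtain ⟨S2, hS2V, hS2c, hS2⟩ := hNorm
  have hint : f + 1 ≤ (S1 ∩ S2).card := by
    have h1 : (S1 ∪ S2).card ≤ 3 * f + 1 := hV ▸ Finset.card_le_card (Finset.union_subset hS1V hS2V)
    have h2 := Finset.card_union_add_card_inter S1 S2
    omega
  -- there is an honest node in S1 ∩ S2
  have : ¬ (S1 ∩ S2 ⊆ V \ honest) := by
    intro h
    have := Finset.card_le_card h
    omega
  obtain ⟨i, hi, hni⟩ := Finset.not_subset.mp this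
  have hiS1 := Finset.mem_inter.mp hi |>.1
  have hiS2 := Finset.mem_inter.mp hi |>.2
  have hihon : i ∈ honest := by
    by_contra h
    exact hni (Finset.mem_sdiff.mpr ⟨hS1V hiS1, h⟩)
  exact hnorm_rule i hihon B2 (hS2 i hiS2) B1 (hS1 i hiS1)
end

section
/- Safety of chained commits: if unique extensibility holds (every block certified for a view v' ≥ v extends the block committed for view v), any two honest nodes that commit blocks at the same chain height commit the same block. -/
private lemma stmt8_mono {Block : Type*} (parent : Block → Option Block) (height : Block → ℕ)
    (hheight : ∀ B B', parent B = some B' → height B = height B' + 1)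
    {X A : Block} (h : Relation.ReflTransGen (fun a b => parent a = some b) X A) :
    height A ≤ height X := by
  induction h with
  | refl => exact le_refl _
  | tail hs hstep ih =>
      have := hheight _ _ hstep
      omega

private lemma stmt8_uniq {Block : Type*} (parent : Block → Option Block) (height : Block → ℕ)
    (hheight : ∀ B B', parent B = some B' → height B = height B' + 1) :
    ∀ n (X A B : Block), height X = n →
      Relation.ReflTransGen (fun a b => parent a = some b) X A →
      Relation.ReflTransGen (fun a b => parent a = some b) X B →
      height A = height B → A = B := by
  intro n
  induction n using Nat.strong_induction_on with
  | _ n ih =>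
    intro X A B hn hA hB hAB
    rcases Relation.ReflTransGen.cases_head hA with rfl | ⟨Y, hXY, hYA⟩
    · rcases Relation.ReflTransGen.cases_head hB with rfl | ⟨Y, hXY, hYB⟩
      · rfl
      · have h1 := stmt8_mono parent height hheight hYB
        have h2 := hheight _ _ hXY
        omega
    · rcases Relation.ReflTransGen.cases_head hB with rfl | ⟨Y', hXY', hYB⟩
      · have h1 := stmt8_mono parent height hheight hYA
        have h2 := hheight _ _ hXY
        omega
      · have : Y = Y' := by
          rw [hXY] at hXY'; exact Option.some.inj hXY'
        subst this
        have h2 := hheight _ _ hXY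
        exact ih (height Y) (by omega) Y A B rfl hYA hYB hAB

/-- Safety of chained commits: under unique extensibility of directly committed blocks,
any two honest nodes that commit blocks at the same chain height commit the same block. -/
theorem stmt8 {Node Block : Type*} (parent : Block → Option Block) (height : Block → ℕ)
    (hheight : ∀ B B', parent B = some B' → height B = height B' + 1)
    (ext : Block → Block → Prop)
    (hext : ext = Relation.ReflTransGen (fun a b => parent a = some b))
    (dc : Node → Block → ℕ → Prop)  -- `dc i B v`: node `i` directly commits `B` certified for view `v`
    (huniq : ∀ i j Bl Bm v v', dc i Bl v → dc j Bm v' → v ≤ v' → ext Bm Bl)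
    (i j : Node) (B B' : Block) (k : ℕ)
    (hi : ∃ Bl v, dc i Bl v ∧ ext Bl B) (hB : height B = k)
    (hj : ∃ Bm v', dc j Bm v' ∧ ext Bm B') (hB' : height B' = k) :
    B = B' := by
  subst hext
  obtain ⟨Bl, v, hdl, hlB⟩ := hi
  obtain ⟨Bm, v', hdm, hmB'⟩ := hj
  rcases le_total v v' with h | h
  · have hml := huniq i j Bl Bm v v' hdl hdm h
    exact stmt8_uniq parent height hheight (height Bm) Bm B B' rfl
      (hml.trans hlB) hmB' (by omega)
  · have hlm := huniq j i Bm Bl v' v hdm hdl h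
    exact stmt8_uniq parent height hheight (height Bl) Bl B B' rfl
      hlB (hlm.trans hmB') (by omega)
end

section
/- Per-view uniqueness for Pipelined Moonshot: under the three vote types (optimistic, normal, fallback) with the stated honest-voting constraints, if two block certificates exist for the same view v then they certify the same block. -/
lemma quorum_honest_stmt9 {α : Type*} [DecidableEq α] (f : ℕ) (V honest S1 S2 : Finset α)
    (hV : V.card = 3 * f + 1) (hbyz : (V \ honest).card ≤ f)
    (h1 : S1 ⊆ V) (h2 : S2 ⊆ V) (c1 : 2 * f + 1 ≤ S1.card) (c2 : 2 * f + 1 ≤ S2.card) :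
    ∃ i, i ∈ honest ∧ i ∈ S1 ∧ i ∈ S2 := by
  have hunion : (S1 ∪ S2).card ≤ 3 * f + 1 := hV ▸ Finset.card_le_card (Finset.union_subset h1 h2)
  have hint : f + 1 ≤ (S1 ∩ S2).card := by
    have := Finset.card_union_add_card_inter S1 S2
    omega
  have hsub : (S1 ∩ S2) \ honest ⊆ V \ honest :=
    Finset.sdiff_subset_sdiff (fun x hx => h1 (Finset.mem_inter.1 hx).1) (le_refl _)
  have : ((S1 ∩ S2) ∩ honest).Nonempty := by
    rw [← Finset.card_pos]
    have h5 : ((S1 ∩ S2) \ honest).card ≤ f := le_trans (Finset.card_le_card hsub) hbyz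
    have h6 := Finset.card_sdiff_add_card_inter (S1 ∩ S2) honest
    omega
  obtain ⟨i, hi⟩ := this
  simp only [Finset.mem_inter] at hi
  exact ⟨i, hi.2, hi.1⟩

/-- Per-view uniqueness for Pipelined Moonshot: under the three vote types with the
stated honest-voting constraints, any two block certificates for the same view certify
the same block. -/
theorem stmt9 {α Block : Type*} [DecidableEq α] (f : ℕ)
    (V honest : Finset α)
    (hV : V.card = 3 * f + 1)
    (hhon : honest ⊆ V)
    (hbyz : (V \ honest).card ≤ f)
    (optVote normVote fbVote : α → Block → Prop)
    (timeoutPrev : α → Prop)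
    -- (1) at most one vote of each type per view
    (h1o : ∀ i ∈ honest, ∀ B B', optVote i B → optVote i B' → B = B')
    (h1n : ∀ i ∈ honest, ∀ B B', normVote i B → normVote i B' → B = B')
    (h1f : ∀ i ∈ honest, ∀ B B', fbVote i B → fbVote i B' → B = B')
    -- (2) normal vote only if no optimistic vote for a different block, and never a fallback vote
    (h2 : ∀ i ∈ honest, ∀ B, normVote i B →
        (∀ B', optVote i B' → B' = B) ∧ (∀ B', ¬ fbVote i B'))
    -- (3) fallback vote only if a timeout certificate for `v-1` exists, and never a normal vote
    (h3 : ∀ i ∈ honest, ∀ B, fbVote i B →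
        (∃ T : Finset α, T ⊆ V ∧ 2 * f + 1 ≤ T.card ∧ ∀ j ∈ T, timeoutPrev j) ∧
        (∀ B', ¬ normVote i B'))
    -- (4) optimistic vote only if the node never sends a timeout for `v-1`
    (h4 : ∀ i ∈ honest, ∀ B, optVote i B → ¬ timeoutPrev i)
    (cert : Block → Prop)
    (hcert : ∀ B, cert B ↔
        (∃ S : Finset α, S ⊆ V ∧ 2 * f + 1 ≤ S.card ∧ ∀ i ∈ S, optVote i B) ∨
        (∃ S : Finset α, S ⊆ V ∧ 2 * f + 1 ≤ S.card ∧ ∀ i ∈ S, normVote i B) ∨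
        (∃ S : Finset α, S ⊆ V ∧ 2 * f + 1 ≤ S.card ∧ ∀ i ∈ S, fbVote i B))
    (B1 B2 : Block) (hc1 : cert B1) (hc2 : cert B2) :
    B1 = B2 := by
  rw [hcert] at hc1 hc2
  rcases hc1 with ⟨S1, hS1V, hS1c, hS1⟩ | ⟨S1, hS1V, hS1c, hS1⟩ | ⟨S1, hS1V, hS1c, hS1⟩ <;>
    rcases hc2 with ⟨S2, hS2V, hS2c, hS2⟩ | ⟨S2, hS2V, hS2c, hS2⟩ | ⟨S2, hS2V, hS2c, hS2⟩ <;>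
    obtain ⟨i, hih, hi1, hi2⟩ :=
      quorum_honest_stmt9 f V honest S1 S2 hV hbyz hS1V hS2V hS1c hS2c
  · exact h1o i hih B1 B2 (hS1 i hi1) (hS2 i hi2)
  · exact (h2 i hih B2 (hS2 i hi2)).1 B1 (hS1 i hi1)
  · -- opt / fallback
    obtain ⟨⟨T, hTV, hTc, hT⟩, _⟩ := h3 i hih B2 (hS2 i hi2)
    obtain ⟨j, hjh, hj1, hjT⟩ :=
      quorum_honest_stmt9 f V honest S1 T hV hbyz hS1V hTV hS1c hTc
    exact absurd (hT j hjT) (h4 j hjh B1 (hS1 j hj1))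
  · exact ((h2 i hih B1 (hS1 i hi1)).1 B2 (hS2 i hi2)).symm
  · exact h1n i hih B1 B2 (hS1 i hi1) (hS2 i hi2)
  · exact absurd (hS1 i hi1) ((h3 i hih B2 (hS2 i hi2)).2 B1)
  · -- fallback / opt
    obtain ⟨⟨T, hTV, hTc, hT⟩, _⟩ := h3 i hih B1 (hS1 i hi1)
    obtain ⟨j, hjh, hj2, hjT⟩ :=
      quorum_honest_stmt9 f V honest S2 T hV hbyz hS2V hTV hS2c hTc
    exact absurd (hT j hjT) (h4 j hjh B2 (hS2 j hj2))
  · exact absurd (hS2 i hi2) ((h3 i hih B1 (hS1 i hi1)).2 B2)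
  · exact h1f i hih B1 B2 (hS1 i hi1) (hS2 i hi2)
end

section
/- If at least f+1 honest nodes hold a certificate C_v (for view v) before sending any timeout message for views ≥ v+1, and every honest timeout message includes that node's highest-ranked certificate, then every timeout certificate for any view v'' ≥ v+1 contains a certificate of rank at least v as its highest-ranked included certificate. -/
/-- If at least `f+1` honest nodes hold a certificate of rank `v` before sending any
timeout for views `≥ v+1`, and honest timeouts carry the sender's highest-ranked
certificate, then every timeout certificate for any view `v'' ≥ v+1` includes a
certificate of rank at least `v`. -/
theorem stmt10 {Node Cert : Type*} [DecidableEq Node] (f v : ℕ)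
    (V honest : Finset Node)
    (hV : V.card = 3 * f + 1)
    (hhon : honest ⊆ V)
    (hbyz : (V \ honest).card ≤ f)
    (rank : Cert → ℕ)
    (sendsT : Node → ℕ → Cert → Prop)        -- node sends a timeout for view `w` carrying a cert
    (holdsBefore : Node → ℕ → Cert → Prop)   -- node holds a cert before sending any timeout for view `w`
    (hcarry : ∀ i ∈ honest, ∀ w C C', sendsT i w C → holdsBefore i w C' → rank C' ≤ rank C)
    (Cv : Cert) (hCv : rank Cv = v)
    (H : Finset Node) (hH : H ⊆ honest) (hHc : f + 1 ≤ H.card)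
    (hhold : ∀ i ∈ H, ∀ w, v + 1 ≤ w → holdsBefore i w Cv)
    (v'' : ℕ) (hv'' : v + 1 ≤ v'')
    (S : Finset Node) (hS : S ⊆ V) (hSc : 2 * f + 1 ≤ S.card)
    (cf : Node → Cert) (hsend : ∀ i ∈ S, sendsT i v'' (cf i)) :
    ∃ i ∈ S, v ≤ rank (cf i) := by
  have hsub : S ∪ H ⊆ V := Finset.union_subset hS (hH.trans hhon)
  have hcard : (S ∪ H).card ≤ 3 * f + 1 := hV ▸ Finset.card_le_card hsub
  have hinter : 0 < (S ∩ H).card := by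
    have := Finset.card_union_add_card_inter S H
    omega
  obtain ⟨i, hi⟩ := Finset.card_pos.mp hinter
  have hiS := Finset.mem_inter.mp hi |>.1
  have hiH := Finset.mem_inter.mp hi |>.2
  refine ⟨i, hiS, ?_⟩
  have := hcarry i (hH hiH) v'' (cf i) Cv (hsend i hiS) (hhold i hiH v'' hv'')
  omega
end

section
/- Unique extensibility for Simple Moonshot (inductive step): assume a block B_k is certified and directly committed for view v (so a child certificate for v+1 exists with at least f+1 honest voters who locked a certificate of rank ≥ v), honest normal votes in any view v' only accept proposals justified by certificates of rank at least the voter's lock and strictly less than v', honest optimistic votes in v' require a lock on a certificate for v'-1 certifying the proposed block's parent, and every certificate for views in [v, v'-1] certifies a block extending B_k. Then every block certified for view v' extends B_k. -/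
/-- Unique extensibility for Simple Moonshot (inductive step): if `B_k` is certified and
directly committed for view `v`, at least `f+1` honest voters for its child lock rank `≥ v`,
honest votes in view `v'` follow the normal/optimistic vote rules, and every certificate
for views in `[v, v'-1]` certifies a block extending `B_k`, then every block certified
for view `v'` extends `B_k`. -/
theorem stmt11 {Node Block : Type*} [DecidableEq Node] (f v v' : ℕ)
    (V honest : Finset Node)
    (hV : V.card = 3 * f + 1)
    (hhon : honest ⊆ V)
    (hbyz : (V \ honest).card ≤ f)
    (parent : Block → Option Block)
    (ext : Block → Block → Prop)
    (hext : ext = Relation.ReflTransGen (fun a b => parent a = some b))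
    (certified : ℕ → Block → Prop)
    (votedOpt votedNorm : Node → ℕ → Block → Prop)
    -- a certificate for view `w` requires `2f+1` votes
    (hcertvotes : ∀ w B, certified w B →
        ∃ S : Finset Node, S ⊆ V ∧ 2 * f + 1 ≤ S.card ∧
          ∀ i ∈ S, votedOpt i w B ∨ votedNorm i w B)
    -- per-view certificate uniqueness
    (huniqView : ∀ w B B', certified w B → certified w B' → B = B')
    (lock : Node → ℕ)
    (Bk Bk1 : Block)
    -- `B_k` is certified for `v` and directly committed: its child is certified for `v+1`
    (hcommit : certified v Bk ∧ certified (v + 1) Bk1 ∧ parent Bk1 = some Bk)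
    -- at least `f+1` honest nodes (the child's honest voters) hold locks of rank ≥ v
    (H : Finset Node) (hH : H ⊆ honest) (hHc : f + 1 ≤ H.card)
    (hlock : ∀ i ∈ H, v ≤ lock i)
    (hvv' : v < v')
    -- normal vote rule: justified by a certificate of rank ≥ the voter's lock and < v'
    (hnormrule : ∀ i ∈ honest, ∀ B, votedNorm i v' B →
        ∃ r Bp, lock i ≤ r ∧ r < v' ∧ certified r Bp ∧ parent B = some Bp)
    -- optimistic vote rule: locked on a certificate for `v'-1` certifying the parent
    (hoptrule : ∀ i ∈ honest, ∀ B, votedOpt i v' B →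
        ∃ Bp, certified (v' - 1) Bp ∧ parent B = some Bp)
    -- induction hypothesis: certificates for views in [v, v'-1] extend B_k
    (hIH : ∀ w B', v ≤ w → w < v' → certified w B' → ext B' Bk)
    (B' : Block) (hB' : certified v' B') :
    ext B' Bk := by
  obtain ⟨S, hSV, hScard, hSvote⟩ := hcertvotes v' B' hB'
  -- find i ∈ S ∩ H
  have hinter : (S ∩ H).Nonempty := by
    rw [← Finset.card_pos]
    have hHV : H ⊆ V := hH.trans hhon
    have := Finset.card_union_le S H
    have hu : (S ∪ H).card ≤ 3 * f + 1 := by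
      rw [← hV]; exact Finset.card_le_card (Finset.union_subset hSV hHV)
    have := Finset.card_inter_add_card_union S H
    omega
  obtain ⟨i, hi⟩ := hinter
  rw [Finset.mem_inter] at hi
  have hihon : i ∈ honest := hH hi.2
  have hilock : v ≤ lock i := hlock i hi.2
  rcases hSvote i hi.1 with hopt | hnorm
  · obtain ⟨Bp, hBp, hpar⟩ := hoptrule i hihon B' hopt
    have hext' : ext Bp Bk := hIH (v' - 1) Bp (by omega) (by omega) hBp
    rw [hext] at hext' ⊢
    exact Relation.ReflTransGen.head hpar hext'
  · obtain ⟨r, Bp, hlr, hrv, hBp, hpar⟩ := hnormrule i hihon B' hnorm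
    have hext' : ext Bp Bk := hIH r Bp (by omega) hrv hBp
    rw [hext] at hext' ⊢
    exact Relation.ReflTransGen.head hpar hext'
end

section
/- Sequential progress: if an honest node enters view v (v ≥ 2), then at least f+1 honest nodes previously entered view v-1, given that entering view v requires possessing a block certificate or timeout certificate for v-1, each requiring 2f+1 distinct signed messages that honest nodes only produce while in view v-1. -/
/-- Sequential progress: if an honest node enters view `v ≥ 2`, then at least `f+1`
honest nodes previously entered view `v-1`. -/
theorem stmt12 {Node : Type*} [DecidableEq Node] (f v : ℕ) (hv : 2 ≤ v)
    (V honest : Finset Node)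
    (hV : V.card = 3 * f + 1)
    (hhon : honest ⊆ V)
    (hbyz : (V \ honest).card ≤ f)
    (entered : Node → ℕ → Prop)
    (sentMsg : Node → ℕ → Prop)  -- vote or timeout message for a view
    -- honest nodes only send messages for a view while in that view
    (hmsg : ∀ i ∈ honest, ∀ w, sentMsg i w → entered i w)
    -- entering view `w` requires a certificate for `w-1`: `2f+1` messages for `w-1`
    (hentry : ∀ i ∈ honest, ∀ w, 2 ≤ w → entered i w →
        ∃ S : Finset Node, S ⊆ V ∧ 2 * f + 1 ≤ S.card ∧ ∀ j ∈ S, sentMsg j (w - 1))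
    (i : Node) (hi : i ∈ honest) (hiv : entered i v) :
    ∃ H : Finset Node, H ⊆ honest ∧ f + 1 ≤ H.card ∧ ∀ j ∈ H, entered j (v - 1) := by
  obtain ⟨S, hSV, hScard, hSmsg⟩ := hentry i hi v hv hiv
  refine ⟨S ∩ honest, Finset.inter_subset_right, ?_, ?_⟩
  · have h1 : S.card ≤ (S ∩ honest).card + (S \ honest).card := by
      rw [Finset.card_inter_add_card_sdiff]
    have h2 : (S \ honest).card ≤ (V \ honest).card :=
      Finset.card_le_card (Finset.sdiff_subset_sdiff hSV le_rfl)
    omega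
  · intro j hj
    have hjh := Finset.mem_inter.mp hj
    exact hmsg j hjh.2 (v - 1) (hSmsg j hjh.1)
end

section
/- Under Commit Moonshot's rules, if an honest node receives 2f+1 distinct commit messages for (B_k, v), then no timeout certificate for view v can ever exist. -/
/-- Commit Moonshot: if an honest node receives `2f+1` distinct commit messages for
`(B_k, v)`, then no timeout certificate for view `v` can ever exist. -/
theorem stmt13 {Node : Type*} [DecidableEq Node] (f : ℕ)
    (V honest : Finset Node)
    (hV : V.card = 3 * f + 1)
    (hhon : honest ⊆ V)
    (hbyz : (V \ honest).card ≤ f)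
    (sendsCommit recvCertLow sendsTimeout : Node → Prop)
    -- honest nodes send a commit message for (B_k, v) only if they received a
    -- certificate for B_k in view v while their timeout_view is less than v
    (h1 : ∀ i ∈ honest, sendsCommit i → recvCertLow i)
    -- such honest nodes enter view v+1 and thereafter never send a timeout for v
    (h2 : ∀ i ∈ honest, recvCertLow i → ¬ sendsTimeout i)
    (S : Finset Node) (hS : S ⊆ V) (hSc : 2 * f + 1 ≤ S.card)
    (hcm : ∀ i ∈ S, sendsCommit i) :
    ¬ ∃ T : Finset Node, T ⊆ V ∧ 2 * f + 1 ≤ T.card ∧ ∀ i ∈ T, sendsTimeout i := by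
  rintro ⟨T, hT, hTc, htm⟩
  -- |S ∩ T| ≥ |S| + |T| - |V| ≥ f + 1
  have hinter : f + 1 ≤ (S ∩ T).card := by
    have := Finset.card_union_le S T
    have hun : (S ∪ T).card ≤ 3 * f + 1 := hV ▸ Finset.card_le_card (Finset.union_subset hS hT)
    have := Finset.card_inter_add_card_union S T
    omega
  -- so S ∩ T has an honest member
  have hne : ((S ∩ T) ∩ honest).Nonempty := by
    by_contra h
    rw [Finset.not_nonempty_iff_eq_empty] at h
    have hsub : S ∩ T ⊆ V \ honest := by
      intro x hx
      rw [Finset.mem_sdiff]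
      refine ⟨hS (Finset.mem_inter.mp hx).1, fun hxh => ?_⟩
      have : x ∈ (S ∩ T) ∩ honest := Finset.mem_inter.mpr ⟨hx, hxh⟩
      simp [h] at this
    have := Finset.card_le_card hsub
    omega
  obtain ⟨x, hx⟩ := hne
  rw [Finset.mem_inter, Finset.mem_inter] at hx
  exact h2 x hx.2 (h1 x hx.2 (hcm x hx.1.1)) (htm x hx.1.2)
end

section
/- Commit Moonshot safety base case: if an honest node collects 2f+1 commit messages for (B_k, v), then any block certified for view v+1 directly extends B_k. -/
lemma honest_mem14 {Node : Type*} [DecidableEq Node] {f : ℕ} {V honest Q : Finset Node}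
    (hbyz : (V \ honest).card ≤ f) (hQ : Q ⊆ V) (hQc : f + 1 ≤ Q.card) :
    ∃ i ∈ Q, i ∈ honest := by
  by_contra h
  push_neg at h
  have hsub : Q ⊆ V \ honest := fun i hi => Finset.mem_sdiff.2 ⟨hQ hi, h i hi⟩
  have := Finset.card_le_card hsub
  omega

/-- Commit Moonshot safety base case: if an honest node collects `2f+1` commit messages
for `(B_k, v)`, then any block certified for view `v+1` directly extends `B_k`. -/
theorem stmt14 {Node Block : Type*} [DecidableEq Node] (f : ℕ)
    (V honest : Finset Node)
    (hV : V.card = 3 * f + 1)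
    (hhon : honest ⊆ V)
    (hbyz : (V \ honest).card ≤ f)
    (parent : Block → Option Block)
    (sendsCommit sendsTimeout : Node → Prop)          -- commit messages for (B_k, v), timeouts for v
    (optVote normVote fbVote : Node → Block → Prop)   -- votes for view v+1
    (certV : Block → Prop)                            -- certified for view v
    (Bk : Block)
    (hBk : certV Bk)
    (huniqV : ∀ B, certV B → B = Bk)                  -- per-view uniqueness for view v
    (S : Finset Node) (hS : S ⊆ V) (hSc : 2 * f + 1 ≤ S.card)
    (hcm : ∀ i ∈ S, sendsCommit i)
    -- honest commit-senders never send a timeout for v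
    (hct : ∀ i ∈ honest, sendsCommit i → ¬ sendsTimeout i)
    -- honest fallback votes for v+1 require a timeout certificate for v
    (hfb : ∀ i ∈ honest, ∀ B, fbVote i B →
        ∃ T : Finset Node, T ⊆ V ∧ 2 * f + 1 ≤ T.card ∧ ∀ j ∈ T, sendsTimeout j)
    -- honest optimistic/normal votes in v+1 only for blocks whose parent is certified in v
    (hparent : ∀ i ∈ honest, ∀ B, optVote i B ∨ normVote i B →
        ∃ Bp, certV Bp ∧ parent B = some Bp)
    (B' : Block)
    (hcert' :
        (∃ Q : Finset Node, Q ⊆ V ∧ 2 * f + 1 ≤ Q.card ∧ ∀ i ∈ Q, optVote i B') ∨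
        (∃ Q : Finset Node, Q ⊆ V ∧ 2 * f + 1 ≤ Q.card ∧ ∀ i ∈ Q, normVote i B') ∨
        (∃ Q : Finset Node, Q ⊆ V ∧ 2 * f + 1 ≤ Q.card ∧ ∀ i ∈ Q, fbVote i B')) :
    parent B' = some Bk := by
  have hvote : ∀ Q : Finset Node, Q ⊆ V → 2 * f + 1 ≤ Q.card →
      (∀ i ∈ Q, optVote i B' ∨ normVote i B') → parent B' = some Bk := by
    intro Q hQ hQc hv
    obtain ⟨i, hiQ, hih⟩ := honest_mem14 hbyz hQ (by omega)
    obtain ⟨Bp, hBp, hpar⟩ := hparent i hih B' (hv i hiQ)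
    rw [huniqV Bp hBp] at hpar
    exact hpar
  rcases hcert' with ⟨Q, hQ, hQc, hv⟩ | ⟨Q, hQ, hQc, hv⟩ | ⟨Q, hQ, hQc, hv⟩
  · exact hvote Q hQ hQc (fun i hi => Or.inl (hv i hi))
  · exact hvote Q hQ hQc (fun i hi => Or.inr (hv i hi))
  · -- fallback: derive a contradiction
    exfalso
    obtain ⟨i, hiQ, hih⟩ := honest_mem14 hbyz hQ (by omega)
    obtain ⟨T, hT, hTc, hTt⟩ := hfb i hih B' (hv i hiQ)
    -- S ∩ T has at least f+1 elements
    have hST : f + 1 ≤ (S ∩ T).card := by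
      have := Finset.card_union_le S T
      have hUV : S ∪ T ⊆ V := Finset.union_subset hS hT
      have := Finset.card_le_card hUV
      have := Finset.card_inter_add_card_union S T
      omega
    obtain ⟨j, hjST, hjh⟩ := honest_mem14 hbyz
      (Finset.Subset.trans Finset.inter_subset_left hS) hST
    have hjS := Finset.mem_of_mem_inter_left hjST
    have hjT := Finset.mem_of_mem_inter_right hjST
    exact hct j hjh (hcm j hjS) (hTt j hjT)
end

section
/- If a block B_h at height h proposed for view v' is committable (its child is certified for view v'+1), then at least f+1 honest nodes possessed the certificate C_{v'}(B_h) before sending any timeout for views ≥ v'+1, and consequently the highest-ranked certificate in any timeout certificate for any view ≥ v'+1 certifies a block extending B_h, provided every certificate of rank ≥ v' certifies a block extending B_h. -/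
/-- If a block `B_h` proposed for view `v'` is committable (its child is certified for
view `v'+1`), then at least `f+1` honest nodes possessed `C_{v'}(B_h)` before sending any
timeout for views `≥ v'+1`, and consequently the highest-ranked certificate in any
timeout certificate for any view `≥ v'+1` certifies a block extending `B_h`, provided
every certificate of rank `≥ v'` certifies a block extending `B_h`. -/
theorem stmt17 {Node Cert Block : Type*} [DecidableEq Node] [DecidableEq Cert] (f v' : ℕ)
    (V honest : Finset Node)
    (hV : V.card = 3 * f + 1)
    (hhon : honest ⊆ V)
    (hbyz : (V \ honest).card ≤ f)
    (parent : Block → Option Block)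
    (ext : Block → Block → Prop)
    (hext : ext = Relation.ReflTransGen (fun a b => parent a = some b))
    (rank : Cert → ℕ) (blockOf : Cert → Block)
    (Bh Bc : Block) (Cv' : Cert)
    (hCrank : rank Cv' = v') (hCblock : blockOf Cv' = Bh)
    (hchild : parent Bc = some Bh)
    (votesAt : Node → ℕ → Block → ℝ → Prop)
    (recvCertAt : Node → Cert → ℝ → Prop)
    (sendsTAt : Node → ℕ → Cert → ℝ → Prop)  -- timeout for a view carrying a certificate
    -- the child Bc is certified for view v'+1: 2f+1 votes
    (S : Finset Node) (hS : S ⊆ V) (hSc : 2 * f + 1 ≤ S.card)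
    (hvotes : ∀ i ∈ S, ∃ s : ℝ, votesAt i (v' + 1) Bc s)
    -- honest nodes vote for a block only after receiving the certificate of its parent
    (hvoteRecv : ∀ i ∈ honest, ∀ s : ℝ, votesAt i (v' + 1) Bc s →
        ∃ s' ≤ s, recvCertAt i Cv' s')
    -- honest timeouts for views ≥ v'+1 are sent only after voting in v'+1
    (hvoteBeforeT : ∀ i ∈ honest, ∀ (s s' : ℝ) (w : ℕ) (c : Cert),
        votesAt i (v' + 1) Bc s → v' + 1 ≤ w → sendsTAt i w c s' → s ≤ s')
    -- honest timeout messages carry the sender's highest-ranked certificate seen so far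
    (hcarry : ∀ i ∈ honest, ∀ (w : ℕ) (c : Cert) (s : ℝ), sendsTAt i w c s →
        ∀ (c' : Cert) (s' : ℝ), s' ≤ s → recvCertAt i c' s' → rank c' ≤ rank c)
    -- every certificate of rank ≥ v' certifies a block extending B_h
    (hextend : ∀ c : Cert, v' ≤ rank c → ext (blockOf c) Bh) :
    (∃ H : Finset Node, H ⊆ honest ∧ f + 1 ≤ H.card ∧
        ∀ i ∈ H, ∀ w, v' + 1 ≤ w → ∀ (c : Cert) (s : ℝ), sendsTAt i w c s →
          ∃ s' ≤ s, recvCertAt i Cv' s') ∧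
    (∀ w, v' + 1 ≤ w → ∀ T : Finset Node, T ⊆ V → 2 * f + 1 ≤ T.card →
        ∀ cf : Node → Cert, (∀ i ∈ T, ∃ s : ℝ, sendsTAt i w (cf i) s) →
        ∀ c' ∈ T.image cf, (∀ i ∈ T, rank (cf i) ≤ rank c') → ext (blockOf c') Bh) := by

  classical
  set H := S ∩ honest with hHdef
  have hHsub : H ⊆ honest := Finset.inter_subset_right
  have hHcard : f + 1 ≤ H.card := by
    have h1 : S \ honest ⊆ V \ honest := Finset.sdiff_subset_sdiff hS le_rfl
    have h2 : (S \ honest).card ≤ f := le_trans (Finset.card_le_card h1) hbyz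
    have h3 : (S ∩ honest).card + (S \ honest).card = S.card :=
      Finset.card_inter_add_card_sdiff S honest
    show f + 1 ≤ (S ∩ honest).card
    omega
  have key : ∀ i ∈ H, ∀ w, v' + 1 ≤ w → ∀ (c : Cert) (s : ℝ), sendsTAt i w c s →
      ∃ s' ≤ s, recvCertAt i Cv' s' := by
    intro i hi w hw c s hsend
    have hih : i ∈ honest := hHsub hi
    have hiS : i ∈ S := (Finset.mem_inter.mp hi).1
    obtain ⟨t, ht⟩ := hvotes i hiS
    obtain ⟨t', ht'le, ht'⟩ := hvoteRecv i hih t ht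
    have hts : t ≤ s := hvoteBeforeT i hih t s w c ht hw hsend
    exact ⟨t', le_trans ht'le hts, ht'⟩
  refine ⟨⟨H, hHsub, hHcard, key⟩, ?_⟩
  intro w hw T hT hTc cf hsends c' hc' hmax
  -- T ∩ H nonempty
  have hHV : H ⊆ V := hHsub.trans hhon
  have hUcard : (T ∪ H).card ≤ 3 * f + 1 := by
    rw [← hV]; exact Finset.card_le_card (Finset.union_subset hT hHV)
  have hint : (T ∩ H).Nonempty := by
    rw [← Finset.card_pos]
    have := Finset.card_union_add_card_inter T H
    omega
  obtain ⟨i, hi⟩ := hint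
  have hiT : i ∈ T := (Finset.mem_inter.mp hi).1
  have hiH : i ∈ H := (Finset.mem_inter.mp hi).2
  obtain ⟨s, hsend⟩ := hsends i hiT
  obtain ⟨s', hs'le, hrecv⟩ := key i hiH w hw (cf i) s hsend
  have h1 : rank Cv' ≤ rank (cf i) :=
    hcarry i (hHsub hiH) w (cf i) s hsend Cv' s' hs'le hrecv
  have h2 : v' ≤ rank c' := by
    have := hmax i hiT; omega
  exact hextend c' h2
end
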